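/- arXiv:2110.12808 — 2 statements merged into one kernel-verified Lean document; each statement's English description precedes it below -/
import Mathlib

section
/- Let X be a T1 topological space and let f : 𝕊 → X be a continuous open surjection from the Sorgenfrey line onto X. If the weight of X is uncountable (X is not second countable), then there exists an uncountable set B ⊆ X such that for every x ∈ B the fiber f⁻¹(x) is a closed discrete subset of the Sorgenfrey line. -/
open Set Filter Topology Function

/-- The Sorgenfrey line: the real line as a type synonym. -/
def SorgenfreyLine : Type := ℝ

notation "𝕊" => SorgenfreyLine

noncomputable instance : LinearOrder 𝕊 := inferInstanceAs (LinearOrder ℝ)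
instance : RatCast 𝕊 := inferInstanceAs (RatCast ℝ)

/-- The topology on the Sorgenfrey line, generated by half-open intervals `[a, b)`, `a < b`. -/
instance : TopologicalSpace 𝕊 :=
  TopologicalSpace.generateFrom {s : Set 𝕊 | ∃ a b : 𝕊, a < b ∧ s = Set.Ico a b}

namespace SorgenfreyAux

theorem exists_rat_btwn' {a b : 𝕊} (h : a < b) : ∃ q : ℚ, a < (q : 𝕊) ∧ (q : 𝕊) < b := by
  letI : Field 𝕊 := Real.instField
  letI : IsStrictOrderedRing 𝕊 := inferInstanceAs (IsStrictOrderedRing ℝ)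
  letI : Archimedean 𝕊 := inferInstanceAs (Archimedean ℝ)
  exact _root_.exists_rat_btwn h

theorem isOpen_Ico (a b : 𝕊) : IsOpen (Ico a b) := by
  rcases lt_or_ge a b with hab | hab
  · exact TopologicalSpace.GenerateOpen.basic _ ⟨a, b, hab, rfl⟩
  · rw [Ico_eq_empty hab.not_gt]
    exact isOpen_empty

theorem isOpen_Ioo (a b : 𝕊) : IsOpen (Ioo a b) := by
  have : Ioo a b = ⋃ c ∈ Ioo a b, Ico c b := by
    ext x
    constructor
    · intro hx
      exact mem_biUnion hx ⟨le_rfl, hx.2⟩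
    · simp only [mem_iUnion]
      rintro ⟨c, hc, hcx⟩
      exact ⟨hc.1.trans_le hcx.1, hcx.2⟩
  rw [this]
  exact isOpen_biUnion fun c _ => isOpen_Ico c b

theorem exists_Ico_subset {u : Set 𝕊} (hu : IsOpen u) : ∀ a ∈ u, ∃ b, a < b ∧ Ico a b ⊆ u := by
  letI : NoMaxOrder 𝕊 := inferInstanceAs (NoMaxOrder ℝ)
  have hu' : TopologicalSpace.GenerateOpen
      {s : Set 𝕊 | ∃ a b : 𝕊, a < b ∧ s = Set.Ico a b} u := hu
  clear hu
  induction hu' with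
  | basic s hs =>
    rintro x hx
    obtain ⟨a, b, _, rfl⟩ := hs
    exact ⟨b, hx.2, fun y hy => ⟨hx.1.trans hy.1, hy.2⟩⟩
  | univ =>
    intro a _
    obtain ⟨b, hb⟩ := exists_gt a
    exact ⟨b, hb, subset_univ _⟩
  | inter s t _ _ ihs iht =>
    intro a ha
    obtain ⟨b1, hb1, h1⟩ := ihs a ha.1
    obtain ⟨b2, hb2, h2⟩ := iht a ha.2
    exact ⟨min b1 b2, lt_min hb1 hb2, fun y hy =>
      ⟨h1 ⟨hy.1, hy.2.trans_le (min_le_left _ _)⟩, h2 ⟨hy.1, hy.2.trans_le (min_le_right _ _)⟩⟩⟩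
  | sUnion S _ ih =>
    intro a ha
    obtain ⟨s, hsS, has⟩ := ha
    obtain ⟨b, hb, hsub⟩ := ih s hsS a has
    exact ⟨b, hb, hsub.trans (subset_sUnion_of_mem hsS)⟩

theorem nhds_basis_Ico (a : 𝕊) : (𝓝 a).HasBasis (a < ·) (Ico a ·) := by
  constructor
  intro t
  constructor
  · intro ht
    obtain ⟨u, hut, hu, hau⟩ := mem_nhds_iff.1 ht
    obtain ⟨b, hb, hsub⟩ := exists_Ico_subset hu a hau
    exact ⟨b, hb, hsub.trans hut⟩
  · rintro ⟨b, hb, hsub⟩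
    exact mem_of_superset ((isOpen_Ico a b).mem_nhds ⟨le_rfl, hb⟩) hsub

end SorgenfreyAux

open SorgenfreyAux in
/-- If `f : 𝕊 → X` is a continuous open surjection onto a T1 space with uncountable weight
(i.e. `X` is not second countable), then there is an uncountable set `B ⊆ X` such that every
fiber over a point of `B` is a closed discrete subset of the Sorgenfrey line. -/
theorem stmt1 {X : Type} [TopologicalSpace X] [T1Space X] (f : 𝕊 → X)
    (hf : Continuous f) (hopen : IsOpenMap f) (hsurj : Surjective f)
    (hw : ¬ SecondCountableTopology X) :
    ∃ B : Set X, ¬ B.Countable ∧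
      ∀ x ∈ B, IsClosed (f ⁻¹' {x}) ∧ DiscreteTopology (f ⁻¹' {x} : Set 𝕊) := by
  refine ⟨{x | DiscreteTopology (f ⁻¹' {x} : Set 𝕊)}, fun hB => hw ?_,
    fun x hx => ⟨isClosed_singleton.preimage hf, hx⟩⟩
  set B : Set X := {x | DiscreteTopology (f ⁻¹' {x} : Set 𝕊)}
  obtain ⟨g, hg⟩ := hsurj.hasRightInverse
  -- the candidate countable basis
  set S : Set (Set X) :=
    (⋃ x ∈ B, ⋃ q : ℚ, {f '' Ico (g x) (q : 𝕊)}) ∪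
      ⋃ q : ℚ, ⋃ r : ℚ, {f '' Ioo (q : 𝕊) (r : 𝕊)} with hS
  have hScount : S.Countable := by
    refine Countable.union ?_ ?_
    · exact hB.biUnion fun _ _ => countable_iUnion fun _ => countable_singleton _
    · exact countable_iUnion fun _ => countable_iUnion fun _ => countable_singleton _
  have hSopen : ∀ u ∈ S, IsOpen u := by
    rintro u (hu | hu) <;> simp only [mem_iUnion, mem_singleton_iff] at hu
    · obtain ⟨x, _, q, rfl⟩ := hu
      exact hopen _ (isOpen_Ico _ _)
    · obtain ⟨q, r, rfl⟩ := hu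
      exact hopen _ (isOpen_Ioo _ _)
  have hbasis : TopologicalSpace.IsTopologicalBasis S := by
    refine TopologicalSpace.isTopologicalBasis_of_isOpen_of_nhds hSopen ?_
    intro a u hau hu
    by_cases ha : a ∈ B
    · -- use the half-open intervals at the chosen preimage point
      have hmem : f ⁻¹' u ∈ 𝓝 (g a) :=
        (hu.preimage hf).mem_nhds (by simp [mem_preimage, hg a, hau])
      obtain ⟨t, hpt, ht⟩ := (nhds_basis_Ico (g a)).mem_iff.1 hmem
      obtain ⟨q, hq1, hq2⟩ := exists_rat_btwn' hpt
      refine ⟨f '' Ico (g a) (q : 𝕊), ?_, ⟨g a, ⟨le_rfl, hq1⟩, hg a⟩, ?_⟩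
      · exact mem_union_left _ (mem_biUnion ha (mem_iUnion.2 ⟨q, rfl⟩))
      · rintro _ ⟨y, hy, rfl⟩
        exact ht ⟨hy.1, hy.2.trans hq2⟩
    · -- the fiber of `a` is not discrete: it has a right accumulation point
      have ha' : ¬ ∀ p ∈ f ⁻¹' {a}, 𝓝[≠] p ⊓ 𝓟 (f ⁻¹' {a}) = ⊥ := by
        intro hcon
        exact ha (discreteTopology_subtype_iff.2 hcon)
      push_neg at ha'
      obtain ⟨p, hpfib, hpne⟩ := ha'
      have hfa : f p = a := hpfib
      have hmem : f ⁻¹' u ∈ 𝓝 p :=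
        (hu.preimage hf).mem_nhds (by simp [mem_preimage, hfa, hau])
      obtain ⟨t, hpt, ht⟩ := (nhds_basis_Ico p).mem_iff.1 hmem
      have hbasis' := (nhdsWithin_hasBasis (nhds_basis_Ico p) ({p}ᶜ)).inf_principal (f ⁻¹' {a})
      have hne := hbasis'.neBot_iff.1 hpne hpt
      obtain ⟨s, ⟨⟨⟨hps, hst⟩, hsp⟩, hsfib⟩⟩ := hne
      have hps' : p < s := lt_of_le_of_ne hps (Ne.symm hsp)
      obtain ⟨q, hq1, hq2⟩ := exists_rat_btwn' hps'
      obtain ⟨r, hr1, hr2⟩ := exists_rat_btwn' hst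
      refine ⟨f '' Ioo (q : 𝕊) (r : 𝕊), ?_, ⟨s, ⟨hq2, hr1⟩, hsfib⟩, ?_⟩
      · exact mem_union_right _ (mem_iUnion.2 ⟨q, mem_iUnion.2 ⟨r, rfl⟩⟩)
      · rintro _ ⟨y, hy, rfl⟩
        exact ht ⟨(hq1.trans hy.1).le, hy.2.trans hr2⟩
  exact hbasis.secondCountableTopology hScount
end

section
/- Let X be a T1 topological space, let f : 𝕊 → X be a continuous open surjection from the Sorgenfrey line onto X, and let x ∈ X be such that the fiber f⁻¹(x) contains a nontrivial convergent sequence (a sequence of points of f⁻¹(x), not eventually constant, converging in the Sorgenfrey line). Then the countable family { f[(a, b)] : a, b ∈ ℚ, a < b } contains a neighborhood base at x; in particular, X is first countable at x. -/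
open Set Filter Topology Function

/-- Identity map from the Sorgenfrey line to the reals. -/
def toR : 𝕊 → ℝ := id
/-- Identity map from the reals to the Sorgenfrey line. -/
def toS : ℝ → 𝕊 := id

lemma sorgenfrey_basis :
    TopologicalSpace.IsTopologicalBasis {s : Set 𝕊 | ∃ a b : 𝕊, a < b ∧ s = Set.Ico a b} := by
  refine ⟨?_, ?_, rfl⟩
  · rintro t1 ⟨a, b, hab, rfl⟩ t2 ⟨c, d, hcd, rfl⟩ z ⟨⟨ha, hb⟩, ⟨hc, hd⟩⟩
    refine ⟨Set.Ico (max a c) (min b d), ⟨max a c, min b d, ?_, rfl⟩,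
      ⟨max_le ha hc, lt_min hb hd⟩, ?_⟩
    · exact lt_of_le_of_lt (max_le ha hc) (lt_min hb hd)
    · rintro w ⟨hw1, hw2⟩
      exact ⟨⟨le_trans (le_max_left _ _) hw1, lt_of_lt_of_le hw2 (min_le_left _ _)⟩,
        ⟨le_trans (le_max_right _ _) hw1, lt_of_lt_of_le hw2 (min_le_right _ _)⟩⟩
  · apply Set.eq_univ_of_forall
    intro z
    have hz : z < toS (toR z + 1) := by
      show toR z < toR z + 1
      linarith
    exact Set.mem_sUnion.2 ⟨Set.Ico z (toS (toR z + 1)), ⟨z, _, hz, rfl⟩,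
      ⟨le_refl z, hz⟩⟩

/-- If `f : 𝕊 → X` is a continuous open surjection onto a T1 space and the fiber over `x`
contains a nontrivial (not eventually constant) sequence converging in the Sorgenfrey line,
then the family `{f '' (a, b) : a < b ∈ ℚ}` contains a neighborhood base at `x`. -/
theorem stmt13 {X : Type} [TopologicalSpace X] [T1Space X] (f : 𝕊 → X)
    (hf : Continuous f) (hopen : IsOpenMap f) (hsurj : Surjective f) (x : X)
    (hfib : ∃ u : ℕ → 𝕊, (∀ n, u n ∈ f ⁻¹' {x}) ∧
      (¬ ∃ c : 𝕊, ∀ᶠ n in atTop, u n = c) ∧ ∃ y : 𝕊, Tendsto u atTop (𝓝 y)) :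
    ∀ U ∈ 𝓝 x, ∃ a b : ℚ, a < b ∧ x ∈ f '' Set.Ioo (a : 𝕊) (b : 𝕊) ∧
      f '' Set.Ioo (a : 𝕊) (b : 𝕊) ⊆ U := by
  obtain ⟨u, hu, hne, y, hy⟩ := hfib
  -- f y = x
  have hfy : f y = x := by
    have h1 : Tendsto (fun n => f (u n)) atTop (𝓝 (f y)) := (hf.tendsto y).comp hy
    have h2 : (fun n => f (u n)) = fun _ => x := funext fun n => hu n
    rw [h2] at h1
    exact (tendsto_const_nhds_iff.1 h1).symm
  intro U hU
  obtain ⟨V, hVU, hVopen, hxV⟩ := mem_nhds_iff.1 hU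
  have hyV : y ∈ f ⁻¹' V := by simp [hfy, hxV]
  obtain ⟨t, ⟨a, b, hab, rfl⟩, ⟨hay, hyb⟩, htV⟩ :=
    sorgenfrey_basis.exists_subset_of_mem_open hyV (hf.isOpen_preimage _ hVopen)
  -- [y, b) is a neighborhood of y
  have hIco : IsOpen (Set.Ico y b) := sorgenfrey_basis.isOpen ⟨y, b, hyb, rfl⟩
  have hev : ∀ᶠ n in atTop, u n ∈ Set.Ico y b :=
    hy.eventually (hIco.mem_nhds ⟨le_refl y, hyb⟩)
  have hfreq : ∃ᶠ n in atTop, u n ≠ y :=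
    Filter.not_eventually.1 fun h => hne ⟨y, h⟩
  obtain ⟨n, hny, hyn, hnb⟩ := (hfreq.and_eventually hev).exists
  have hyn' : y < u n := lt_of_le_of_ne hyn (Ne.symm hny)
  obtain ⟨q1, hq1a, hq1b⟩ := exists_rat_btwn (show toR y < toR (u n) from hyn')
  obtain ⟨q2, hq2a, hq2b⟩ := exists_rat_btwn (show toR (u n) < toR b from hnb)
  refine ⟨q1, q2, ?_, ⟨u n, ⟨hq1b, hq2a⟩, hu n⟩, ?_⟩
  · exact_mod_cast lt_trans hq1b hq2a
  · rintro w ⟨z, ⟨hz1, hz2⟩, rfl⟩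
    apply hVU
    apply htV
    refine ⟨le_trans hay (le_of_lt (lt_trans ?_ hz1)), lt_trans hz2 ?_⟩
    · exact hq1a
    · exact hq2b
end
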